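/- If f_i : P_i → M_i (i = 1, ..., n) are projective I-covers, then ⊕f_i : ⊕P_i → ⊕M_i is a projective I-cover. -/

import Mathlib

open Submodule Function LinearMap

universe u v w x y

section Defs

variable (R : Type u) [Ring R]

/-- `I` (a left ideal) is a two-sided ideal. -/
def IsTwoSidedI (I : Ideal R) : Prop := ∀ a b : R, a ∈ I → a * b ∈ I

variable {M : Type v} [AddCommGroup M] [Module R M]

/-- `N` is PSD in the submodule `T` of `M` (taking `T = ⊤` gives "PSD in `M`"):
whenever `N + X = T`, there is a projective direct summand `S` of `T` with `S ≤ N`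
and `T = S ⊕ X`. -/
def PSDIn (T N : Submodule R M) : Prop :=
  ∀ X : Submodule R M, X ≤ T → N ⊔ X = T →
    ∃ S : Submodule R M, Module.Projective R S ∧ S ≤ N ∧ S ⊔ X = T ∧ S ⊓ X = ⊥

/-- `M` is PSD for the ideal `I`: every submodule of `IM` is PSD in `M`. -/
def PSDFor (I : Ideal R) (M : Type v) [AddCommGroup M] [Module R M] : Prop :=
  ∀ N : Submodule R M, N ≤ I • (⊤ : Submodule R M) → PSDIn R ⊤ N

/-- `R` is a left PSD ring for `I`: every finitely generated free left `R`-module is PSD for `I`. -/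
def PSDRing (I : Ideal R) : Prop :=
  ∀ (F : Type u) [AddCommGroup F] [Module R F] [Module.Free R F] [Module.Finite R F],
    PSDFor R I F

/-- `f : P → M` is a projective `I`-cover. -/
def IsProjICover (I : Ideal R) {P : Type w} [AddCommGroup P] [Module R P]
    (f : P →ₗ[R] M) : Prop :=
  Surjective f ∧ Module.Projective R P ∧
    LinearMap.ker f ≤ I • (⊤ : Submodule R P) ∧ PSDIn R ⊤ (LinearMap.ker f)

/-- A projective `I`-cover of `M`. -/
structure ProjICover (I : Ideal R) (M : Type v) [AddCommGroup M] [Module R M] where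
  P : Type w
  [addP : AddCommGroup P]
  [modP : Module R P]
  f : P →ₗ[R] M
  cover : IsProjICover R I f

/-- `R` is `I`-semiregular. -/
def ISemiregular (I : Ideal R) : Prop :=
  ∀ a : R, ∃ P Q : Submodule R R, IsCompl P Q ∧ Module.Projective R P ∧
    P ≤ Submodule.span R {a} ∧ Submodule.span R {a} ⊓ Q ≤ I

/-- `R` is `I`-semiperfect. -/
def ISemiperfect (I : Ideal R) : Prop :=
  ∀ K : Submodule R R, ∃ A B : Submodule R R, IsCompl A B ∧ Module.Projective R A ∧
    A ≤ K ∧ K ⊓ B ≤ I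

end Defs




section Defs2

variable (R : Type u) [Ring R]
variable {M : Type v} [AddCommGroup M] [Module R M]

/-- A submodule `S` is small in the submodule `T` (take `T = ⊤` for "small in `M`"). -/
def SmallIn (T S : Submodule R M) : Prop :=
  ∀ X : Submodule R M, X ≤ T → S ⊔ X = T → X = T

/-- `K` is DM in the submodule `T` of `M`: whenever `K + X = T` there is a direct
summand `S` of `T` with `S ≤ K` and `S + X = T`. -/
def DMIn (T K : Submodule R M) : Prop :=
  ∀ X : Submodule R M, X ≤ T → K ⊔ X = T →
    ∃ S : Submodule R M, S ≤ K ∧ (∃ S' : Submodule R M, S ⊔ S' = T ∧ S ⊓ S' = ⊥) ∧ S ⊔ X = T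

/-- `M` is DM for `I`: every submodule of `IM` is DM in `M`. -/
def DMFor (I : Ideal R) (M : Type v) [AddCommGroup M] [Module R M] : Prop :=
  ∀ K : Submodule R M, K ≤ I • (⊤ : Submodule R M) → DMIn R ⊤ K

/-- `R` is a left DM ring for `I`. -/
def DMRing (I : Ideal R) : Prop :=
  ∀ (F : Type u) [AddCommGroup F] [Module R F] [Module.Free R F] [Module.Finite R F],
    DMFor R I F

/-- `M` is an `I`-supplemented module. -/
def ISupplemented (I : Ideal R) (M : Type v) [AddCommGroup M] [Module R M] : Prop :=
  ∀ X : Submodule R M, ∃ Y : Submodule R M, Module.Projective R Y ∧ X ⊔ Y = ⊤ ∧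
    X ⊓ Y ≤ I • Y ∧ DMIn R Y (X ⊓ Y)

/-- `M` is a finitely `I`-supplemented module. -/
def FinISupplemented (I : Ideal R) (M : Type v) [AddCommGroup M] [Module R M] : Prop :=
  ∀ X : Submodule R M, X.FG → ∃ Y : Submodule R M, Module.Projective R Y ∧ X ⊔ Y = ⊤ ∧
    X ⊓ Y ≤ I • Y ∧ DMIn R Y (X ⊓ Y)

/-- `M` is a supplemented module. -/
def Supplemented (M : Type v) [AddCommGroup M] [Module R M] : Prop :=
  ∀ X : Submodule R M, ∃ Y : Submodule R M, X ⊔ Y = ⊤ ∧ SmallIn R Y (X ⊓ Y)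

/-- `M` is an `I`-semiperfect module. -/
def ISemiperfectMod (I : Ideal R) (M : Type v) [AddCommGroup M] [Module R M] : Prop :=
  ∀ K : Submodule R M, ∃ A B : Submodule R M, IsCompl A B ∧ Module.Projective R A ∧
    A ≤ K ∧ K ⊓ B ≤ I • (⊤ : Submodule R M)

/-- The radical of `M`: the intersection of all maximal submodules. -/
def RadM (M : Type v) [AddCommGroup M] [Module R M] : Submodule R M :=
  sInf {N : Submodule R M | IsCoatom N}

/-- The socle of `M`: the sum of all simple submodules. -/
def SocM (M : Type v) [AddCommGroup M] [Module R M] : Submodule R M :=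
  sSup {N : Submodule R M | IsSimpleModule R N}

/-- `P` is locally projective (lifting version). -/
def LocallyProjective (P : Type w) [AddCommGroup P] [Module R P] : Prop :=
  ∀ (A : Type x) (B : Type y) [AddCommGroup A] [Module R A] [AddCommGroup B] [Module R B]
    (g : A →ₗ[R] B) (f : P →ₗ[R] B), Surjective g →
      ∀ P₀ : Submodule R P, P₀.FG → ∃ h : P →ₗ[R] A, ∀ p ∈ P₀, f p = g (h p)

/-- `P` is locally projective (splitting version). -/
def LocallyProjectiveB (P : Type w) [AddCommGroup P] [Module R P] : Prop :=
  ∀ (N : Type x) [AddCommGroup N] [Module R N] (g : N →ₗ[R] P), Surjective g →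
    ∀ P₀ : Submodule R P, P₀.FG → ∃ h : P →ₗ[R] N, ∀ p ∈ P₀, g (h p) = p


/-- A locally projective `I`-cover of `M`. -/
structure LocProjICover (I : Ideal R) (M : Type v) [AddCommGroup M] [Module R M] where
  P : Type w
  [addP : AddCommGroup P]
  [modP : Module R P]
  f : P →ₗ[R] M
  surj : Surjective f
  locProj : LocallyProjective.{u, w, x, y} R P
  ker_le : LinearMap.ker f ≤ I • (⊤ : Submodule R P)
  psd : PSDIn R ⊤ (LinearMap.ker f)

/-- A locally projective cover of `M`. -/
structure LocProjCover (M : Type v) [AddCommGroup M] [Module R M] where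
  P : Type w
  [addP : AddCommGroup P]
  [modP : Module R P]
  f : P →ₗ[R] M
  surj : Surjective f
  locProj : LocallyProjective.{u, w, x, y} R P
  ker_small : SmallIn R ⊤ (LinearMap.ker f)

/-- A projective cover of `M`. -/
structure ProjCover (M : Type v) [AddCommGroup M] [Module R M] where
  P : Type w
  [addP : AddCommGroup P]
  [modP : Module R P]
  f : P →ₗ[R] M
  surj : Surjective f
  proj : Module.Projective R P
  ker_small : SmallIn R ⊤ (LinearMap.ker f)

/-- `M` is self-projective (quasi-projective). -/
def SelfProjective (M : Type v) [AddCommGroup M] [Module R M] : Prop :=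
  ∀ (K : Submodule R M) (f : M →ₗ[R] M ⧸ K), ∃ h : M →ₗ[R] M, K.mkQ ∘ₗ h = f

/-- A projectivity class of `R`-modules (in a fixed universe). -/
def ProjectivityClass
    (Pc : ∀ (N : Type w) [AddCommGroup N] [Module R N], Prop) : Prop :=
  (∀ (N : Type w) [AddCommGroup N] [Module R N], SelfProjective R N → Pc N) ∧
  (∀ (N P : Type w) [AddCommGroup N] [Module R N] [AddCommGroup P] [Module R P]
      (f : P →ₗ[R] N), Surjective f → Module.Projective R P → Pc (P × N) →
        Module.Projective R N)

/-- `Pc` is closed under direct summands. -/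
def ClosedUnderSummands
    (Pc : ∀ (N : Type w) [AddCommGroup N] [Module R N], Prop) : Prop :=
  ∀ (N P : Type w) [AddCommGroup N] [Module R N] [AddCommGroup P] [Module R P],
    Pc P → ∀ (i : N →ₗ[R] P) (p : P →ₗ[R] N), p ∘ₗ i = LinearMap.id → Pc N

/-- A `Pc`-projective `I`-cover of `M`. -/
structure PProjICover (Pc : ∀ (N : Type w) [AddCommGroup N] [Module R N], Prop)
    (I : Ideal R) (M : Type v) [AddCommGroup M] [Module R M] where
  Q : Type w
  [addQ : AddCommGroup Q]
  [modQ : Module R Q]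
  g : Q →ₗ[R] M
  surj : Surjective g
  memP : Pc Q
  ker_le : LinearMap.ker g ≤ I • (⊤ : Submodule R Q)
  psd : PSDIn R ⊤ (LinearMap.ker g)

end Defs2


section Aux

variable {R : Type u} [Ring R]

/-- Transfer PSD along an injective linear map. -/
lemma psdIn_map {Q : Type v} {P : Type w} [AddCommGroup Q] [Module R Q]
    [AddCommGroup P] [Module R P] (g : Q →ₗ[R] P) (hg : Function.Injective g)
    {K : Submodule R Q} (h : PSDIn R ⊤ K) :
    PSDIn R (LinearMap.range g) (K.map g) := by
  intro X hX hsup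
  have hmapinj := Submodule.map_injective_of_injective hg
  have hXc : (X.comap g).map g = X := by
    rw [Submodule.map_comap_eq]; exact inf_eq_right.mpr hX
  have h1 : K ⊔ X.comap g = ⊤ := by
    apply hmapinj
    rw [Submodule.map_sup, hXc, hsup, Submodule.map_top]
  obtain ⟨S, hSp, hSK, hSsup, hSinf⟩ := h (X.comap g) le_top h1
  refine ⟨S.map g, ?_, Submodule.map_mono hSK, ?_, ?_⟩
  · haveI := hSp
    exact Module.Projective.of_equiv (Submodule.equivMapOfInjective g hg S)
  · rw [← hXc, ← Submodule.map_sup, hSsup, Submodule.map_top]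
  · rw [← hXc, ← Submodule.map_inf g hg, hSinf, Submodule.map_bot]

/-- The sup of two disjoint projective submodules is projective. -/
lemma projective_sup {P : Type w} [AddCommGroup P] [Module R P] {S₁ S₂ : Submodule R P}
    (hd : S₁ ⊓ S₂ = ⊥) (h₁ : Module.Projective R S₁) (h₂ : Module.Projective R S₂) :
    Module.Projective R ↥(S₁ ⊔ S₂) := by
  haveI := h₁; haveI := h₂
  let g : (S₁ × S₂) →ₗ[R] ↥(S₁ ⊔ S₂) :=
    (Submodule.inclusion le_sup_left).coprod (Submodule.inclusion le_sup_right)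
  have hg : ∀ a b, ((g (a, b) : ↥(S₁ ⊔ S₂)) : P) = (a : P) + (b : P) := fun a b => rfl
  have hsurj : Surjective g := by
    rintro ⟨x, hx⟩
    rcases Submodule.mem_sup.mp hx with ⟨a, ha, b, hb, rfl⟩
    exact ⟨(⟨a, ha⟩, ⟨b, hb⟩), rfl⟩
  have hinj : Injective g := by
    rintro ⟨a, b⟩ ⟨a', b'⟩ hab
    have h0 : (a : P) + (b : P) = (a' : P) + (b' : P) := by
      have := congrArg (Subtype.val) hab
      simpa [hg] using this
    have hmem : (a : P) - (a' : P) ∈ S₁ ⊓ S₂ := by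
      constructor
      · exact Submodule.sub_mem _ a.2 a'.2
      · have he : (a : P) - (a' : P) = (b' : P) - (b : P) :=
          sub_eq_sub_iff_add_eq_add.mpr (by rw [h0, add_comm])
        rw [he]; exact Submodule.sub_mem _ b'.2 b.2
    rw [hd] at hmem
    have ha : (a : P) = (a' : P) := sub_eq_zero.mp ((Submodule.mem_bot R).mp hmem)
    have hb : (b : P) = (b' : P) := by
      apply add_left_cancel (a := (a : P))
      rw [h0, ha]
    exact Prod.ext (Subtype.ext ha) (Subtype.ext hb)
  exact Module.Projective.of_equiv (LinearEquiv.ofBijective g ⟨hinj, hsurj⟩)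

/-- Binary sum lemma for PSD submodules. -/
lemma psdIn_sup {P : Type w} [AddCommGroup P] [Module R P] {P₁ P₂ K₁ K₂ : Submodule R P}
    (hd : P₁ ⊓ P₂ = ⊥) (hK₁ : K₁ ≤ P₁) (hK₂ : K₂ ≤ P₂)
    (h₁ : PSDIn R P₁ K₁) (h₂ : PSDIn R P₂ K₂) : PSDIn R (P₁ ⊔ P₂) (K₁ ⊔ K₂) := by
  intro X hX hsup
  set Z := (K₁ ⊔ X) ⊓ P₂ with hZdef
  have hZ : K₂ ⊔ Z = P₂ := by
    have e := sup_inf_assoc_of_le (x := K₂) (K₁ ⊔ X) (z := P₂) hK₂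
    have e2 : K₂ ⊔ (K₁ ⊔ X) = P₁ ⊔ P₂ := by
      rw [← sup_assoc, sup_comm K₂ K₁, hsup]
    rw [e2, inf_eq_right.mpr le_sup_right] at e
    exact e.symm
  obtain ⟨S₂, hS₂p, hS₂K, hS₂sup, hS₂inf⟩ := h₂ Z inf_le_right hZ
  have hS₂P₂ : S₂ ≤ P₂ := hS₂K.trans hK₂
  have hK₂le : K₂ ≤ K₁ ⊔ (S₂ ⊔ X) := by
    calc K₂ ≤ P₂ := hK₂
    _ = S₂ ⊔ Z := hS₂sup.symm
    _ ≤ S₂ ⊔ (K₁ ⊔ X) := sup_le_sup_left inf_le_left _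
    _ = K₁ ⊔ (S₂ ⊔ X) := sup_left_comm _ _ _
  have hT2 : K₁ ⊔ (S₂ ⊔ X) = P₁ ⊔ P₂ := by
    refine le_antisymm (sup_le (hK₁.trans le_sup_left)
      (sup_le (hS₂P₂.trans le_sup_right) hX)) ?_
    rw [← hsup]
    exact sup_le (sup_le le_sup_left hK₂le) (le_sup_right.trans le_sup_right)
  set W := (S₂ ⊔ X) ⊓ P₁ with hWdef
  have hW : K₁ ⊔ W = P₁ := by
    have e := sup_inf_assoc_of_le (x := K₁) (S₂ ⊔ X) (z := P₁) hK₁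
    rw [hT2, inf_eq_right.mpr le_sup_left] at e
    exact e.symm
  obtain ⟨S₁, hS₁p, hS₁K, hS₁sup, hS₁inf⟩ := h₁ W inf_le_right hW
  have hS₁P₁ : S₁ ≤ P₁ := hS₁K.trans hK₁
  have hdisj : S₁ ⊓ S₂ = ⊥ := by
    rw [eq_bot_iff, ← hd]
    exact inf_le_inf hS₁P₁ hS₂P₂
  refine ⟨S₁ ⊔ S₂, projective_sup hdisj hS₁p hS₂p, sup_le_sup hS₁K hS₂K, ?_, ?_⟩
  · refine le_antisymm (sup_le (sup_le (hS₁P₁.trans le_sup_left)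
      (hS₂P₂.trans le_sup_right)) hX) ?_
    rw [← hT2]
    have hK₁le : K₁ ≤ (S₁ ⊔ S₂) ⊔ X := by
      calc K₁ ≤ P₁ := hK₁
      _ = S₁ ⊔ W := hS₁sup.symm
      _ ≤ S₁ ⊔ (S₂ ⊔ X) := sup_le_sup_left inf_le_left _
      _ = (S₁ ⊔ S₂) ⊔ X := (sup_assoc _ _ _).symm
    refine sup_le hK₁le (sup_le ?_ le_sup_right)
    exact (le_sup_right : S₂ ≤ S₁ ⊔ S₂).trans le_sup_left
  · rw [eq_bot_iff]
    rintro y ⟨hyS, hyX⟩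
    rcases Submodule.mem_sup.mp hyS with ⟨a, ha, b, hb, rfl⟩
    have hb0 : b = 0 := by
      have hbmem : b ∈ S₂ ⊓ Z := by
        refine ⟨hb, ?_, hS₂P₂ hb⟩
        have : b = (a + b) - a := by abel
        rw [this]
        exact Submodule.sub_mem _ (le_sup_right (α := Submodule R P) hyX)
          (le_sup_left (α := Submodule R P) (hS₁K ha))
      rw [hS₂inf] at hbmem
      simpa using hbmem
    subst hb0
    have ha0 : a = 0 := by
      have hamem : a ∈ S₁ ⊓ W := by
        refine ⟨ha, ?_, hS₁P₁ ha⟩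
        have : a = a + 0 := by abel
        exact le_sup_right (α := Submodule R P) (by rwa [← this] at hyX)
      rw [hS₁inf] at hamem
      simpa using hamem
    simp [ha0]

/-- Finite sums of PSD submodules over independent "coordinate" submodules. -/
lemma psdIn_finset_sup {P : Type w} [AddCommGroup P] [Module R P] {ι : Type x}
    [DecidableEq ι] {Pv Kv : ι → Submodule R P} (hK : ∀ i, Kv i ≤ Pv i)
    (h : ∀ i, PSDIn R (Pv i) (Kv i))
    (hdis : ∀ (a : ι) (s : Finset ι), a ∉ s → Pv a ⊓ s.sup Pv = ⊥) (s : Finset ι) :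
    PSDIn R (s.sup Pv) (s.sup Kv) := by
  induction s using Finset.induction_on with
  | empty =>
    intro X hX _
    simp only [Finset.sup_empty] at hX ⊢
    refine ⟨⊥, inferInstance, le_rfl, ?_, ?_⟩
    · rw [le_bot_iff.mp hX]; simp
    · simp
  | @insert a s has ih =>
    rw [Finset.sup_insert, Finset.sup_insert]
    exact psdIn_sup (hdis a s has) (hK a)
      (Finset.sup_le fun i hi => (hK i).trans (Finset.le_sup hi)) (h a) ih

end Aux

theorem stmt4 {R : Type u} [Ring R] (I : Ideal R) (hI : IsTwoSidedI R I)
    {n : ℕ} (P : Fin n → Type v) (M : Fin n → Type w)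
    [∀ i, AddCommGroup (P i)] [∀ i, Module R (P i)]
    [∀ i, AddCommGroup (M i)] [∀ i, Module R (M i)]
    (f : ∀ i, P i →ₗ[R] M i) (hf : ∀ i, IsProjICover R I (f i)) :
    IsProjICover R I
      (LinearMap.pi (fun i => (f i) ∘ₗ (LinearMap.proj i)) :
        (∀ i, P i) →ₗ[R] ∀ i, M i) := by
  classical
  set F : (∀ i, P i) →ₗ[R] ∀ i, M i :=
    LinearMap.pi (fun i => (f i) ∘ₗ (LinearMap.proj i)) with hF
  have hFapp : ∀ (x : ∀ i, P i) (i : Fin n), F x i = f i (x i) := fun x i => rfl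
  refine ⟨?_, ?_, ?_, ?_⟩
  · intro y
    have : ∀ i, ∃ p, f i p = y i := fun i => (hf i).1 (y i)
    choose p hp using this
    exact ⟨p, funext fun i => hp i⟩
  · haveI : ∀ i, Module.Projective R (P i) := fun i => (hf i).2.1
    haveI : Module.Projective R (DirectSum (Fin n) fun i => P i) :=
      inferInstanceAs (Module.Projective R (Π₀ i, P i))
    exact Module.Projective.of_equiv (DirectSum.linearEquivFunOnFintype R (Fin n) P)
  · intro x hx
    have hx' : ∀ i, x i ∈ LinearMap.ker (f i) := by
      intro i
      have := congrFun (LinearMap.mem_ker.mp hx) i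
      simpa [hFapp] using this
    rw [← Finset.univ_sum_single x]
    refine Submodule.sum_mem _ (fun i _ => ?_)
    have h1 : Pi.single i (x i) ∈ (I • (⊤ : Submodule R (P i))).map (LinearMap.single R P i) :=
      ⟨x i, (hf i).2.2.1 (hx' i), rfl⟩
    rw [Submodule.map_smul''] at h1
    exact (smul_mono_right I le_top : _ ≤ I • (⊤ : Submodule R (∀ i, P i))) h1
  · have hKle : ∀ i, (LinearMap.ker (f i)).map (LinearMap.single R P i) ≤
        LinearMap.range (LinearMap.single R P i) := fun i =>
      (Submodule.map_mono le_top).trans_eq (Submodule.map_top _)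
    have hpsd : ∀ i, PSDIn R (LinearMap.range (LinearMap.single R P i))
        ((LinearMap.ker (f i)).map (LinearMap.single R P i)) := fun i =>
      psdIn_map _ (Pi.single_injective (M := P) i) (hf i).2.2.2
    have hdis : ∀ (a : Fin n) (s : Finset (Fin n)), a ∉ s →
        LinearMap.range (LinearMap.single R P a) ⊓
          (s.sup fun i => LinearMap.range (LinearMap.single R P i)) = ⊥ := by
      intro a s has
      rw [eq_bot_iff]
      rintro x ⟨hx1, hx2⟩
      obtain ⟨y, rfl⟩ := hx1
      have hker : (s.sup fun i => LinearMap.range (LinearMap.single R P i)) ≤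
          LinearMap.ker (LinearMap.proj (R := R) (φ := P) a) := by
        refine Finset.sup_le fun j hj => ?_
        rintro _ ⟨z, rfl⟩
        have hja : a ≠ j := fun h => has (h ▸ hj)
        show Pi.single j z a = 0
        exact Pi.single_eq_of_ne hja z
      have h0 : Pi.single a y a = 0 := hker hx2
      rw [Pi.single_eq_same] at h0
      subst h0
      simp [LinearMap.single_apply]
    have key := psdIn_finset_sup hKle hpsd hdis Finset.univ
    have htop : (Finset.univ.sup fun i => LinearMap.range (LinearMap.single R P i)) =
        (⊤ : Submodule R (∀ i, P i)) := by
      rw [eq_top_iff]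
      intro x _
      rw [← Finset.univ_sum_single x]
      exact Submodule.sum_mem _ fun i _ =>
        Finset.le_sup (f := fun i => LinearMap.range (LinearMap.single R P i))
          (Finset.mem_univ i) ⟨x i, rfl⟩
    have hker : (Finset.univ.sup fun i =>
        (LinearMap.ker (f i)).map (LinearMap.single R P i)) = LinearMap.ker F := by
      refine le_antisymm (Finset.sup_le fun i _ => ?_) ?_
      · rintro _ ⟨y, hy, rfl⟩
        rw [LinearMap.mem_ker]
        funext j
        rw [hFapp]
        show f j ((LinearMap.single R P i y) j) = 0
        rcases eq_or_ne j i with rfl | hne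
        · simpa [LinearMap.single_apply] using hy
        · simp [LinearMap.single_apply, Pi.single_eq_of_ne hne]
      · intro x hx
        have hx' : ∀ i, x i ∈ LinearMap.ker (f i) := by
          intro i
          have := congrFun (LinearMap.mem_ker.mp hx) i
          simpa [hFapp] using this
        rw [← Finset.univ_sum_single x]
        exact Submodule.sum_mem _ fun i _ =>
          Finset.le_sup (f := fun i => (LinearMap.ker (f i)).map (LinearMap.single R P i))
            (Finset.mem_univ i) ⟨x i, hx' i, rfl⟩
    rw [← htop, ← hker]
    exact key
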